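/- Every infinite doubly stochastic element of multiplicity n is equivalent to a finite doubly stochastic element, i.e., given a countable family {φ_i : A_i → B_i} of partial isomorphisms in [[E]] with ∑_i χ_{A_i} = n·1 and ∑_i χ_{B_i} = n·1 a.e., there exists a finite family {ψ_j : j=1,…,m} in [[E]] with the same associated matrix ∑_j χ(graph ψ_j) = ∑_i χ(graph φ_i). -/

import Mathlib

open MeasureTheory
open scoped Classical ENNReal

/-- A measure-preserving partial isomorphism with domain `A`, given by the restriction of
`f` to `A`, whose graph is contained in the equivalence relation `E` (an element of `[[E]]`). -/
def IsPartialIso {X : Type*} [MeasurableSpace X] (μ : Measure X) (E : Set (X × X))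
    (A : Set X) (f : X → X) : Prop :=
  MeasurableSet A ∧ Measurable f ∧ Set.InjOn f A ∧ MeasurableSet (f '' A) ∧
    (∀ x ∈ A, (x, f x) ∈ E) ∧
    ∀ s ⊆ A, MeasurableSet s → μ (f '' s) = μ s

lemma aux_card_of_tsum {S : Set ℕ} {n : ℕ}
    (h : ∑' i, (if i ∈ S then (1:ℝ≥0∞) else 0) = n) :
    ∃ hf : S.Finite, hf.toFinset.card = n := by
  have h1 : ∑' i, (if i ∈ S then (1:ℝ≥0∞) else 0) = ∑' (_ : S), (1:ℝ≥0∞) := by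
    rw [tsum_subtype S (fun _ => (1:ℝ≥0∞))]
    simp [Set.indicator_apply]
  rw [h1, ENNReal.tsum_set_one] at h
  have hfin : S.Finite := by
    by_contra hS
    rw [Set.Infinite.encard_eq hS] at h
    simp at h
  refine ⟨hfin, ?_⟩
  rw [hfin.encard_eq_coe_toFinset_card] at h
  exact_mod_cast h


/-- every infinite (countable) doubly stochastic element of multiplicity `n`
is equivalent to a finite one: given a countable family `{φ_i : A_i → B_i} ⊆ [[E]]` with
`∑_i χ_{A_i} = n` and `∑_i χ_{B_i} = n` a.e., there is a finite family `{ψ_j} ⊆ [[E]]`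
with the same associated matrix `∑_j χ(graph ψ_j) = ∑_i χ(graph φ_i)` (a.e.). -/
theorem infinite_DSE_equivalent_to_finite
    {X : Type*} [MeasurableSpace X] [StandardBorelSpace X]
    (μ : Measure X) [IsProbabilityMeasure μ]
    (E : Set (X × X)) (hE : Equivalence fun x y => (x, y) ∈ E)
    (hcnt : ∀ x, {y | (x, y) ∈ E}.Countable)
    (n : ℕ) (A : ℕ → Set X) (f : ℕ → X → X)
    (hiso : ∀ i, IsPartialIso μ E (A i) (f i))
    (hrow : ∀ᵐ x ∂μ, ∑' i : ℕ, (A i).indicator (fun _ => (1 : ℝ≥0∞)) x = (n : ℝ≥0∞))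
    (hcol : ∀ᵐ y ∂μ, ∑' i : ℕ, (f i '' A i).indicator (fun _ => (1 : ℝ≥0∞)) y = (n : ℝ≥0∞)) :
    ∃ (m : ℕ) (B : Fin m → Set X) (g : Fin m → X → X),
      (∀ j, IsPartialIso μ E (B j) (g j)) ∧
      ∀ᵐ x ∂μ, ∀ y : X,
        (∑ j : Fin m, if x ∈ B j ∧ g j x = y then (1 : ℝ≥0∞) else 0) =
          ∑' i : ℕ, if x ∈ A i ∧ f i x = y then (1 : ℝ≥0∞) else 0 := by
  obtain ⟨hAm, hfm, hfinj, hCm, hgr, hmeas⟩ :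
      (∀ i, MeasurableSet (A i)) ∧ (∀ i, Measurable (f i)) ∧
      (∀ i, Set.InjOn (f i) (A i)) ∧ (∀ i, MeasurableSet (f i '' A i)) ∧
      (∀ i, ∀ x ∈ A i, (x, f i x) ∈ E) ∧
      (∀ i, ∀ s ⊆ A i, MeasurableSet s → μ (f i '' s) = μ s) := by
    refine ⟨fun i => (hiso i).1, fun i => (hiso i).2.1, fun i => (hiso i).2.2.1,
      fun i => (hiso i).2.2.2.1, fun i => (hiso i).2.2.2.2.1, fun i => (hiso i).2.2.2.2.2⟩
  -- row and column rank functions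
  set rk : X → ℕ → ℕ := fun x i => Nat.count (fun i' => x ∈ A i') i with hrk_def
  set ck : X → ℕ → ℕ := fun y i => Nat.count (fun i' => y ∈ f i' '' A i') i with hck_def
  have hrkm : ∀ i, Measurable fun x => rk x i := by
    intro i
    induction i with
    | zero => simpa [hrk_def] using measurable_const
    | succ i ih =>
      have : (fun x => rk x (i+1)) = fun x => rk x i + if x ∈ A i then 1 else 0 := by
        funext x; simp [hrk_def, Nat.count_succ]
      rw [this]
      exact ih.add (Measurable.ite (hAm i) measurable_const measurable_const)
  have hckm : ∀ i, Measurable fun y => ck y i := by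
    intro i
    induction i with
    | zero => simpa [hck_def] using measurable_const
    | succ i ih =>
      have : (fun y => ck y (i+1)) = fun y => ck y i + if y ∈ f i '' A i then 1 else 0 := by
        funext y; simp [hck_def, Nat.count_succ]
      rw [this]
      exact ih.add (Measurable.ite (hCm i) measurable_const measurable_const)
  -- the pieces
  set D : ℕ → ℕ → ℕ → Set X := fun j k i =>
    A i ∩ (fun x => rk x i) ⁻¹' {j} ∩ (fun x => ck (f i x) i) ⁻¹' {k} with hD_def
  have hDmem : ∀ j k i x, x ∈ D j k i ↔ x ∈ A i ∧ rk x i = j ∧ ck (f i x) i = k := by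
    intro j k i x; simp [hD_def, and_assoc]
  have hDm : ∀ j k i, MeasurableSet (D j k i) := by
    intro j k i
    exact ((hAm i).inter ((hrkm i) (measurableSet_singleton j))).inter
      (((hckm i).comp (hfm i)) (measurableSet_singleton k))
  have hDsub : ∀ j k i, D j k i ⊆ A i := fun j k i x hx => ((hDmem j k i x).1 hx).1
  set Bs : ℕ → ℕ → Set X := fun j k => ⋃ i, D j k i with hBs_def
  have hBsm : ∀ j k, MeasurableSet (Bs j k) := fun j k => MeasurableSet.iUnion fun i => hDm j k i
  have hDuniq : ∀ j k i i' x, x ∈ D j k i → x ∈ D j k i' → i = i' := by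
    intro j k i i' x hi hi'
    have h1 := (hDmem j k i x).1 hi
    have h2 := (hDmem j k i' x).1 hi'
    exact Nat.count_injective h1.1 h2.1 (h1.2.1.trans h2.2.1.symm)
  -- column uniqueness
  have hCuniq : ∀ k i i' (y : X), y ∈ f i '' A i → y ∈ f i' '' A i' →
      ck y i = k → ck y i' = k → i = i' := by
    intro k i i' y h1 h2 h3 h4
    exact Nat.count_injective h1 h2 (h3.trans h4.symm)
  set gs : ℕ → ℕ → X → X := fun j k x =>
    if h : ∃ i, x ∈ D j k i then f (Nat.find h) x else x with hgs_def
  have hgsD : ∀ j k i x, x ∈ D j k i → gs j k x = f i x := by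
    intro j k i x hx
    have h : ∃ i', x ∈ D j k i' := ⟨i, hx⟩
    simp only [hgs_def, dif_pos h]
    rw [hDuniq j k _ i x (Nat.find_spec h) hx]
  have hgsnot : ∀ j k x, x ∉ Bs j k → gs j k x = x := by
    intro j k x hx
    have h : ¬ ∃ i, x ∈ D j k i := by simpa [hBs_def, Set.mem_iUnion] using hx
    simp [hgs_def, dif_neg h]
  have hgsm : ∀ j k, Measurable (gs j k) := by
    intro j k t ht
    have heq : gs j k ⁻¹' t = ((Bs j k)ᶜ ∩ t) ∪ ⋃ i, (D j k i ∩ f i ⁻¹' t) := by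
      ext x
      by_cases hx : ∃ i, x ∈ D j k i
      · obtain ⟨i, hi⟩ := hx
        have hgx := hgsD j k i x hi
        have hxB : x ∈ Bs j k := Set.mem_iUnion.2 ⟨i, hi⟩
        simp only [Set.mem_preimage, Set.mem_union, Set.mem_inter_iff, Set.mem_compl_iff,
          Set.mem_iUnion, hgx]
        constructor
        · intro h; exact Or.inr ⟨i, hi, h⟩
        · rintro (⟨hB, _⟩ | ⟨i', hi', h⟩)
          · exact absurd hxB hB
          · rwa [hDuniq j k i i' x hi hi']
      · have hxB : x ∉ Bs j k := by simpa [hBs_def, Set.mem_iUnion] using hx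
        have hgx := hgsnot j k x hxB
        simp only [Set.mem_preimage, Set.mem_union, Set.mem_inter_iff, Set.mem_compl_iff,
          Set.mem_iUnion, hgx]
        constructor
        · intro h; exact Or.inl ⟨hxB, h⟩
        · rintro (⟨_, h⟩ | ⟨i, hi, _⟩)
          · exact h
          · exact absurd ⟨i, hi⟩ hx
    rw [heq]
    exact ((hBsm j k).compl.inter ht).union
      (MeasurableSet.iUnion fun i => (hDm j k i).inter ((hfm i) ht))
  have hginj : ∀ j k, Set.InjOn (gs j k) (Bs j k) := by
    intro j k x hx x' hx' hxy
    obtain ⟨i, hi⟩ := Set.mem_iUnion.1 hx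
    obtain ⟨i', hi'⟩ := Set.mem_iUnion.1 hx'
    rw [hgsD j k i x hi, hgsD j k i' x' hi'] at hxy
    have h1 := (hDmem j k i x).1 hi
    have h2 := (hDmem j k i' x').1 hi'
    have hii' : i = i' := by
      refine hCuniq k i i' (f i x) ⟨x, h1.1, rfl⟩ ?_ h1.2.2 ?_
      · rw [hxy]; exact ⟨x', h2.1, rfl⟩
      · rw [hxy]; exact h2.2.2
    subst hii'
    exact hfinj i h1.1 h2.1 hxy
  have himg : ∀ j k (s : Set X), s ⊆ Bs j k → gs j k '' s = ⋃ i, f i '' (s ∩ D j k i) := by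
    intro j k s hs
    ext y
    constructor
    · rintro ⟨x, hxs, rfl⟩
      obtain ⟨i, hi⟩ := Set.mem_iUnion.1 (hs hxs)
      exact Set.mem_iUnion.2 ⟨i, x, ⟨hxs, hi⟩, (hgsD j k i x hi).symm⟩
    · intro hy
      obtain ⟨i, x, ⟨hxs, hxD⟩, rfl⟩ := Set.mem_iUnion.1 hy
      exact ⟨x, hxs, hgsD j k i x hxD⟩
  have himgm : ∀ j k i (s : Set X), MeasurableSet s → MeasurableSet (f i '' (s ∩ D j k i)) := by
    intro j k i s hsm
    exact MeasurableSet.image_of_measurable_injOn (hsm.inter (hDm j k i)) (hfm i)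
      ((hfinj i).mono (Set.inter_subset_right.trans (hDsub j k i)))
  have himgdisj : ∀ j k (s : Set X),
      Pairwise (Function.onFun Disjoint (fun i => f i '' (s ∩ D j k i))) := by
    intro j k s i i' hne
    rw [Function.onFun, Set.disjoint_left]
    rintro y ⟨x, hx, rfl⟩ ⟨x', hx', hx'y⟩
    have h1 := (hDmem j k i x).1 hx.2
    have h2 := (hDmem j k i' x').1 hx'.2
    refine hne (hCuniq k i i' (f i x) ⟨x, h1.1, rfl⟩ ?_ h1.2.2 ?_)
    · rw [← hx'y]; exact ⟨x', h2.1, rfl⟩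
    · rw [← hx'y]; exact h2.2.2
  have hDdisj : ∀ j k (s : Set X), Pairwise (Function.onFun Disjoint (fun i => s ∩ D j k i)) := by
    intro j k s i i' hne
    rw [Function.onFun, Set.disjoint_left]
    rintro x ⟨_, hx⟩ ⟨_, hx'⟩
    exact hne (hDuniq j k i i' x hx hx')
  have hmp : ∀ j k (s : Set X), s ⊆ Bs j k → MeasurableSet s → μ (gs j k '' s) = μ s := by
    intro j k s hs hsm
    rw [himg j k s hs,
      measure_iUnion (himgdisj j k s) (fun i => himgm j k i s hsm)]
    have h1 : ∀ i, μ (f i '' (s ∩ D j k i)) = μ (s ∩ D j k i) := fun i =>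
      hmeas i _ (Set.inter_subset_right.trans (hDsub j k i)) (hsm.inter (hDm j k i))
    rw [tsum_congr h1, ← measure_iUnion (hDdisj j k s) (fun i => hsm.inter (hDm j k i)),
      ← Set.inter_iUnion]
    congr 1
    exact Set.inter_eq_left.2 hs
  have hpiso : ∀ j k, IsPartialIso μ E (Bs j k) (gs j k) := by
    intro j k
    refine ⟨hBsm j k, hgsm j k, hginj j k, ?_, ?_, fun s hs hsm => hmp j k s hs hsm⟩
    · rw [himg j k _ (le_refl _)]
      exact MeasurableSet.iUnion fun i => himgm j k i _ (hBsm j k)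
    · intro x hx
      obtain ⟨i, hi⟩ := Set.mem_iUnion.1 hx
      rw [hgsD j k i x hi]
      exact hgr i x ((hDmem j k i x).1 hi).1
  -- the almost-everywhere column control
  set Ns : Set X := {y | ¬ (∑' i, (f i '' A i).indicator (fun _ => (1:ℝ≥0∞)) y = n)} with hNs_def
  have hNm : MeasurableSet Ns := by
    have : Measurable fun y => ∑' i, (f i '' A i).indicator (fun _ => (1:ℝ≥0∞)) y :=
      Measurable.ennreal_tsum fun i => measurable_const.indicator (hCm i)
    exact (this (measurableSet_singleton (n : ℝ≥0∞))).compl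
  have hNnull : μ Ns = 0 := ae_iff.1 hcol
  have hpull : ∀ i, ∀ᵐ x ∂μ, x ∈ A i →
      ∑' i', (f i' '' A i').indicator (fun _ => (1:ℝ≥0∞)) (f i x) = n := by
    intro i
    rw [ae_iff]
    refine measure_mono_null (fun x hx => ?_) (show μ (A i ∩ f i ⁻¹' Ns) = 0 from ?_)
    · simp only [Set.mem_setOf_eq] at hx
      rw [Classical.not_imp] at hx
      exact ⟨hx.1, hx.2⟩
    · have h1 := hmeas i (A i ∩ f i ⁻¹' Ns) Set.inter_subset_left ((hAm i).inter ((hfm i) hNm))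
      have h2 : f i '' (A i ∩ f i ⁻¹' Ns) ⊆ Ns := by
        rintro y ⟨x, ⟨_, hx⟩, rfl⟩; exact hx
      refine le_antisymm ?_ zero_le
      calc μ (A i ∩ f i ⁻¹' Ns) = μ (f i '' (A i ∩ f i ⁻¹' Ns)) := h1.symm
        _ ≤ μ Ns := measure_mono h2
        _ = 0 := hNnull
  have hColAll : ∀ᵐ x ∂μ, ∀ i, x ∈ A i →
      ∑' i', (f i' '' A i').indicator (fun _ => (1:ℝ≥0∞)) (f i x) = n := ae_all_iff.2 hpull
  -- conclude
  refine ⟨n * n, fun q => Bs ((finProdFinEquiv.symm q).1 : ℕ) ((finProdFinEquiv.symm q).2 : ℕ),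
    fun q => gs ((finProdFinEquiv.symm q).1 : ℕ) ((finProdFinEquiv.symm q).2 : ℕ),
    fun q => hpiso _ _, ?_⟩
  filter_upwards [hrow, hColAll] with x hx1 hx2
  intro y
  -- reindex the finite sum
  rw [← Equiv.sum_comp (finProdFinEquiv : Fin n × Fin n ≃ Fin (n * n))
    (fun q => if x ∈ Bs ((finProdFinEquiv.symm q).1 : ℕ) ((finProdFinEquiv.symm q).2 : ℕ) ∧
        gs ((finProdFinEquiv.symm q).1 : ℕ) ((finProdFinEquiv.symm q).2 : ℕ) x = y
      then (1:ℝ≥0∞) else 0)]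
  simp only [Equiv.symm_apply_apply]
  -- row finiteness at x
  have hx1' : ∑' i, (if i ∈ {i' | x ∈ A i'} then (1:ℝ≥0∞) else 0) = n := by
    simpa [Set.indicator_apply] using hx1
  obtain ⟨hfinR, hcardR⟩ := aux_card_of_tsum hx1'
  set T : Finset ℕ := hfinR.toFinset.filter (fun i => f i x = y) with hT_def
  have hTmem : ∀ i, i ∈ T ↔ x ∈ A i ∧ f i x = y := by
    intro i
    simp [hT_def, Set.Finite.mem_toFinset]
  have hRHS : ∑' i, (if x ∈ A i ∧ f i x = y then (1:ℝ≥0∞) else 0) = (T.card : ℝ≥0∞) := by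
    rw [tsum_eq_sum (s := T) (fun i hi => if_neg (fun h => hi ((hTmem i).2 h)))]
    calc ∑ i ∈ T, (if x ∈ A i ∧ f i x = y then (1:ℝ≥0∞) else 0)
        = ∑ i ∈ T, (1:ℝ≥0∞) := Finset.sum_congr rfl fun i hi => if_pos ((hTmem i).1 hi)
      _ = (T.card : ℝ≥0∞) := by simp
  rw [hRHS, Finset.sum_boole]
  congr 1
  -- now a bijection between pairs and indices
  refine (Finset.card_bij (fun i hi => ?_) ?_ ?_ ?_).symm
  · -- the map
    refine (⟨rk x i, ?_⟩, ⟨ck y i, ?_⟩)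
    · have := Nat.count_lt_card hfinR ((hTmem i).1 hi).1
      rwa [hcardR] at this
    · have hyA : x ∈ A i := ((hTmem i).1 hi).1
      have hyy : f i x = y := ((hTmem i).1 hi).2
      have hc := hx2 i hyA
      rw [hyy] at hc
      have hc' : ∑' i', (if i' ∈ {i'' | y ∈ f i'' '' A i''} then (1:ℝ≥0∞) else 0) = n := by
        simpa [Set.indicator_apply] using hc
      obtain ⟨hfinC, hcardC⟩ := aux_card_of_tsum hc'
      have hyC : y ∈ f i '' A i := ⟨x, hyA, hyy⟩
      have := Nat.count_lt_card hfinC hyC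
      rwa [hcardC] at this
  · -- maps into the filter
    intro i hi
    have hA := ((hTmem i).1 hi).1
    have hy := ((hTmem i).1 hi).2
    have hxD : x ∈ D (rk x i) (ck y i) i := (hDmem _ _ i x).2 ⟨hA, rfl, by rw [hy]⟩
    simp only [Finset.mem_filter, Finset.mem_univ, true_and]
    exact ⟨Set.mem_iUnion.2 ⟨i, hxD⟩, by rw [hgsD _ _ i x hxD]; exact hy⟩
  · -- injective
    intro i hi i' hi' h
    have h1 : rk x i = rk x i' := congrArg (fun p => (p.1 : ℕ)) h
    exact Nat.count_injective ((hTmem i).1 hi).1 ((hTmem i').1 hi').1 h1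
  · -- surjective
    rintro ⟨j, k⟩ hp
    simp only [Finset.mem_filter, Finset.mem_univ, true_and] at hp
    obtain ⟨hB, hgy⟩ := hp
    obtain ⟨i, hi⟩ := Set.mem_iUnion.1 hB
    have hmemD := (hDmem _ _ i x).1 hi
    have hfy : f i x = y := by rw [← hgsD _ _ i x hi]; exact hgy
    refine ⟨i, (hTmem i).2 ⟨hmemD.1, hfy⟩, ?_⟩
    have hk : ck y i = (k : ℕ) := by rw [← hfy]; exact hmemD.2.2
    ext
    · exact hmemD.2.1
    · exact hk
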